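/- There is a function f : ℕ → ℕ such that for every finite simple graph G and every set T of vertices of G, there exists a matching-mimicking network G' for (G, T) having at most f(|T|) vertices. -/

import Mathlib

/-- A finite simple graph: a finite vertex set together with a symmetric,
irreflexive adjacency relation whose endpoints lie in the vertex set. -/
structure FinGraph (V : Type) where
  verts : Set V
  finite : verts.Finite
  Adj : V → V → Prop
  symm : ∀ u v, Adj u v → Adj v u
  irrefl : ∀ v, ¬ Adj v v
  mem_of_adj : ∀ u v, Adj u v → u ∈ verts ∧ v ∈ verts

/-- The set of vertices covered by a set of (unordered) edges. -/
def coversVerts {V : Type} (M : Set (Sym2 V)) : Set V := {v | ∃ e ∈ M, v ∈ e}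

/-- `M` is a matching of `G`: a set of edges of `G`, no two of which share an endpoint. -/
def FinGraph.IsMatching {V : Type} (G : FinGraph V) (M : Set (Sym2 V)) : Prop :=
  (∀ e ∈ M, ∃ u v, G.Adj u v ∧ e = s(u, v)) ∧
  ∀ e ∈ M, ∀ f ∈ M, e ≠ f → ∀ v, v ∈ e → v ∉ f

/-- The matching pattern of `G` on a terminal set `T`: the family of subsets `X ⊆ T`
such that some matching of `G` covers exactly `(V(G) \ T) ∪ X`. -/
def FinGraph.matchingPattern {V : Type} (G : FinGraph V) (T : Set V) : Set (Set V) :=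
  {X | X ⊆ T ∧ ∃ M, G.IsMatching M ∧ coversVerts M = (G.verts \ T) ∪ X}

/-! ### Pushforward of a graph along a map injective on the vertices -/

def FinGraph.map {V W : Type} (φ : V → W) (G : FinGraph V) : FinGraph W where
  verts := φ '' G.verts
  finite := G.finite.image φ
  Adj a b := a ≠ b ∧ ∃ u v, G.Adj u v ∧ a = φ u ∧ b = φ v
  symm := by
    rintro a b ⟨hne, u, v, h, rfl, rfl⟩
    exact ⟨hne.symm, v, u, G.symm u v h, rfl, rfl⟩
  irrefl := by rintro v ⟨hne, -⟩; exact hne rfl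
  mem_of_adj := by
    rintro a b ⟨hne, u, v, h, rfl, rfl⟩
    obtain ⟨hu, hv⟩ := G.mem_of_adj u v h
    exact ⟨⟨u, hu, rfl⟩, ⟨v, hv, rfl⟩⟩

variable {V W : Type}

lemma FinGraph.adj_ne {G : FinGraph V} {u v : V} (h : G.Adj u v) : u ≠ v := by
  rintro rfl; exact G.irrefl u h

lemma coversVerts_subset {G : FinGraph V} {M : Set (Sym2 V)} (hM : G.IsMatching M) :
    coversVerts M ⊆ G.verts := by
  rintro x ⟨e, heM, hxe⟩
  obtain ⟨u, v, huv, rfl⟩ := hM.1 e heM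
  rcases Sym2.mem_iff.1 hxe with rfl | rfl
  · exact (G.mem_of_adj _ _ huv).1
  · exact (G.mem_of_adj _ _ huv).2

lemma sym2_map_injOn {φ : V → W} {G : FinGraph V} (hφ : Set.InjOn φ G.verts)
    {u v u' v' : V} (h : G.Adj u v) (h' : G.Adj u' v')
    (heq : s(φ u, φ v) = s(φ u', φ v')) : s(u, v) = s(u', v') := by
  obtain ⟨hu, hv⟩ := G.mem_of_adj _ _ h
  obtain ⟨hu', hv'⟩ := G.mem_of_adj _ _ h'
  rw [Sym2.eq_iff] at heq ⊢
  rcases heq with ⟨h1, h2⟩ | ⟨h1, h2⟩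
  · exact Or.inl ⟨hφ hu hu' h1, hφ hv hv' h2⟩
  · exact Or.inr ⟨hφ hu hv' h1, hφ hv hu' h2⟩

/-- Pushing a matching forward. -/
lemma matching_map {φ : V → W} {G : FinGraph V} (hφ : Set.InjOn φ G.verts)
    {M : Set (Sym2 V)} (hM : G.IsMatching M) :
    (G.map φ).IsMatching (Sym2.map φ '' M) ∧
      coversVerts (Sym2.map φ '' M) = φ '' coversVerts M := by
  constructor
  · constructor
    · rintro e ⟨e₀, he₀, rfl⟩
      obtain ⟨u, v, huv, rfl⟩ := hM.1 e₀ he₀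
      obtain ⟨hu, hv⟩ := G.mem_of_adj _ _ huv
      refine ⟨φ u, φ v, ⟨fun hc => (G.adj_ne huv) (hφ hu hv hc), u, v, huv, rfl, rfl⟩, ?_⟩
      rw [Sym2.map_pair_eq]
    · rintro e ⟨e₀, he₀, rfl⟩ f ⟨f₀, hf₀, rfl⟩ hne w hwe hwf
      obtain ⟨u, v, huv, rfl⟩ := hM.1 e₀ he₀
      obtain ⟨u', v', huv', rfl⟩ := hM.1 f₀ hf₀
      obtain ⟨hu, hv⟩ := G.mem_of_adj _ _ huv
      obtain ⟨hu', hv'⟩ := G.mem_of_adj _ _ huv'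
      rw [Sym2.map_pair_eq] at hwe hwf hne
      have hef : s(u,v) ≠ s(u',v') := by
        rintro h; exact hne (by rw [Sym2.eq_iff] at h; rcases h with ⟨rfl,rfl⟩|⟨rfl,rfl⟩ <;>
          simp [Sym2.eq_swap])
      rcases Sym2.mem_iff.1 hwe with rfl | rfl <;> rcases Sym2.mem_iff.1 hwf with h | h
      · exact hM.2 _ he₀ _ hf₀ hef u (by simp) (by rw [Sym2.mem_iff]; left; exact hφ hu hu' h)
      · exact hM.2 _ he₀ _ hf₀ hef u (by simp) (by rw [Sym2.mem_iff]; right; exact hφ hu hv' h)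
      · exact hM.2 _ he₀ _ hf₀ hef v (by simp) (by rw [Sym2.mem_iff]; left; exact hφ hv hu' h)
      · exact hM.2 _ he₀ _ hf₀ hef v (by simp) (by rw [Sym2.mem_iff]; right; exact hφ hv hv' h)
  · ext w
    constructor
    · rintro ⟨e, ⟨e₀, he₀, rfl⟩, hwe⟩
      obtain ⟨u, v, huv, rfl⟩ := hM.1 e₀ he₀
      rw [Sym2.map_pair_eq] at hwe
      rcases Sym2.mem_iff.1 hwe with rfl | rfl
      · exact ⟨u, ⟨_, he₀, by simp⟩, rfl⟩
      · exact ⟨v, ⟨_, he₀, by simp⟩, rfl⟩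
    · rintro ⟨x, ⟨e, heM, hxe⟩, rfl⟩
      exact ⟨Sym2.map φ e, ⟨e, heM, rfl⟩, Sym2.mem_map.2 ⟨x, hxe, rfl⟩⟩

/-- Pulling a matching of the mapped graph back. -/
lemma matching_map_surj {φ : V → W} {G : FinGraph V} (hφ : Set.InjOn φ G.verts)
    {M' : Set (Sym2 W)} (hM' : (G.map φ).IsMatching M') :
    ∃ M, G.IsMatching M ∧ Sym2.map φ '' M = M' := by
  refine ⟨{e | (∃ u v, G.Adj u v ∧ e = s(u, v)) ∧ Sym2.map φ e ∈ M'}, ⟨?_, ?_⟩, ?_⟩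
  · rintro e ⟨⟨u, v, huv, rfl⟩, -⟩; exact ⟨u, v, huv, rfl⟩
  · rintro e ⟨⟨u, v, huv, rfl⟩, heM'⟩ f ⟨⟨u', v', huv', rfl⟩, hfM'⟩ hne w hwe hwf
    rw [Sym2.map_pair_eq] at heM' hfM'
    have himne : s(φ u, φ v) ≠ s(φ u', φ v') := by
      intro h; exact hne (sym2_map_injOn hφ huv huv' h)
    rcases Sym2.mem_iff.1 hwe with rfl | rfl <;> rcases Sym2.mem_iff.1 hwf with rfl | rfl
    · exact hM'.2 _ heM' _ hfM' himne (φ w) (by simp) (by simp)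
    · exact hM'.2 _ heM' _ hfM' himne (φ w) (by simp) (by simp)
    · exact hM'.2 _ heM' _ hfM' himne (φ w) (by simp) (by simp)
    · exact hM'.2 _ heM' _ hfM' himne (φ w) (by simp) (by simp)
  · ext e'
    constructor
    · rintro ⟨e, ⟨-, he⟩, rfl⟩; exact he
    · intro he'
      obtain ⟨a, b, ⟨-, u, v, huv, rfl, rfl⟩, rfl⟩ := hM'.1 e' he'
      exact ⟨s(u, v), ⟨⟨u, v, huv, rfl⟩, by rw [Sym2.map_pair_eq]; exact he'⟩,
        by rw [Sym2.map_pair_eq]⟩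

/-- Transfer of the matching pattern along a map injective on the vertices. -/
lemma pattern_map {φ : V → W} (G : FinGraph V) (T : Set V) (hT : T ⊆ G.verts)
    (hφ : Set.InjOn φ G.verts) :
    (G.map φ).matchingPattern (φ '' T) = (Set.image φ) '' G.matchingPattern T := by
  have hdiff : φ '' (G.verts \ T) = φ '' G.verts \ φ '' T := hφ.image_diff_subset hT
  ext Y
  constructor
  · rintro ⟨hYT, M', hM', hcov⟩
    obtain ⟨M, hM, rfl⟩ := matching_map_surj hφ hM'
    have hcov' := (matching_map hφ hM).2
    set X := φ ⁻¹' Y ∩ T with hX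
    have hXT : X ⊆ T := Set.inter_subset_right
    have hYX : φ '' X = Y := by
      apply Set.Subset.antisymm
      · rintro y ⟨x, ⟨hxY, -⟩, rfl⟩; exact hxY
      · intro y hy
        obtain ⟨t, ht, rfl⟩ := hYT hy
        exact ⟨t, ⟨hy, ht⟩, rfl⟩
    refine ⟨X, ⟨hXT, M, hM, ?_⟩, hYX⟩
    have himg : φ '' coversVerts M = φ '' ((G.verts \ T) ∪ X) := by
      rw [← hcov', hcov, Set.image_union, hdiff, hYX]; rfl
    exact (hφ.image_eq_image_iff (coversVerts_subset hM)
      (Set.union_subset (Set.diff_subset.trans le_rfl) (hXT.trans hT))).1 himg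
  · rintro ⟨X, ⟨hXT, M, hM, hcov⟩, rfl⟩
    obtain ⟨hM', hcov'⟩ := matching_map hφ hM
    refine ⟨Set.image_mono (f := φ) hXT, Sym2.map φ '' M, hM', ?_⟩
    rw [hcov', hcov, Set.image_union, hdiff]; rfl

/-! ### Canonical realizations over ℕ -/

/-- `H` realizes the pattern `P` on the canonical terminal set `{0, …, k-1}`. -/
def Realizes (k : ℕ) (P : Set (Set ℕ)) (H : FinGraph ℕ) : Prop :=
  Set.Iio k ⊆ H.verts ∧ H.matchingPattern (Set.Iio k) = P

noncomputable def minSize (k : ℕ) (P : Set (Set ℕ)) : ℕ :=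
  sInf {n | ∃ H, Realizes k P H ∧ H.verts.ncard = n}

noncomputable def mmBound (k : ℕ) : ℕ :=
  sSup (minSize k '' {P | ∃ H, Realizes k P H})

lemma pats_finite (k : ℕ) : {P : Set (Set ℕ) | ∃ H, Realizes k P H}.Finite := by
  apply Set.Finite.subset ((Set.finite_Iio k).finite_subsets).finite_subsets
  rintro P ⟨H, -, rfl⟩
  intro X hX
  exact hX.1

lemma minSize_le_bound {k : ℕ} {P : Set (Set ℕ)} (h : ∃ H, Realizes k P H) :
    minSize k P ≤ mmBound k := by
  apply le_csSup (((pats_finite k).image _).bddAbove)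
  exact ⟨P, h, rfl⟩

lemma exists_minimal_realization {k : ℕ} {P : Set (Set ℕ)} {H₀ : FinGraph ℕ}
    (h : Realizes k P H₀) :
    ∃ H, Realizes k P H ∧ H.verts.ncard = minSize k P ∧
      H.verts.ncard ≤ H₀.verts.ncard ∧ H.verts.ncard ≤ mmBound k := by
  have hne : {n | ∃ H, Realizes k P H ∧ H.verts.ncard = n}.Nonempty :=
    ⟨H₀.verts.ncard, H₀, h, rfl⟩
  obtain ⟨H, hH, hcard⟩ := Nat.sInf_mem hne
  exact ⟨H, hH, hcard, by rw [hcard]; exact Nat.sInf_le ⟨H₀, h, rfl⟩,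
    by rw [hcard]; exact minSize_le_bound ⟨H₀, h⟩⟩

/-! ### Construction of the injections -/

lemma ncard_Iio (k : ℕ) : (Set.Iio k).ncard = k := by
  rw [← Finset.coe_range, Set.ncard_coe_finset, Finset.card_range]

lemma exists_phi (G : FinGraph V) (T : Set V) (hT : T ⊆ G.verts) :
    ∃ φ : V → ℕ, Set.InjOn φ G.verts ∧ φ '' T = Set.Iio T.ncard := by
  classical
  have hTf : T.Finite := G.finite.subset hT
  have hDf : (G.verts \ T).Finite := G.finite.diff (t := T)
  haveI := hTf.fintype
  haveI := hDf.fintype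
  set k := T.ncard with hk
  have hcardT : Fintype.card T = k := by
    rw [hk, ← Nat.card_coe_set_eq, Nat.card_eq_fintype_card]
  let e : ↥T ≃ Fin k := (Fintype.equivFin ↥T).trans (finCongr hcardT)
  let g : ↥(G.verts \ T) ≃ Fin (Fintype.card ↥(G.verts \ T)) := Fintype.equivFin _
  refine ⟨fun v => if h : v ∈ T then (e ⟨v, h⟩ : ℕ)
    else if h' : v ∈ G.verts \ T then k + (g ⟨v, h'⟩ : ℕ) else 0, ?_, ?_⟩
  · intro u hu v hv heq
    simp only at heq
    by_cases hut : u ∈ T <;> by_cases hvt : v ∈ T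
    · rw [dif_pos hut, dif_pos hvt] at heq
      have : e ⟨u, hut⟩ = e ⟨v, hvt⟩ := Fin.val_injective heq
      simpa using e.injective this
    · rw [dif_pos hut, dif_neg hvt, dif_pos (Set.mem_diff_of_mem hv hvt)] at heq
      exact absurd heq (by omega)
    · rw [dif_neg hut, dif_pos hvt, dif_pos (Set.mem_diff_of_mem hu hut)] at heq
      exact absurd heq (by omega)
    · rw [dif_neg hut, dif_pos (Set.mem_diff_of_mem hu hut), dif_neg hvt,
        dif_pos (Set.mem_diff_of_mem hv hvt)] at heq
      have : g ⟨u, _⟩ = g ⟨v, _⟩ := Fin.val_injective (by omega)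
      simpa using g.injective this
  · ext n
    simp only [Set.mem_image, Set.mem_Iio]
    constructor
    · rintro ⟨t, ht, rfl⟩
      rw [dif_pos ht]
      exact (e ⟨t, ht⟩).isLt
    · intro hn
      refine ⟨(e.symm ⟨n, hn⟩ : V), (e.symm ⟨n, hn⟩).2, ?_⟩
      rw [dif_pos (e.symm ⟨n, hn⟩).2]
      simp [Subtype.eta]

lemma exists_psi (G : FinGraph V) (T : Set V) (hT : T ⊆ G.verts)
    (hGne : G.verts.Nonempty) (φ : V → ℕ) (hφinj : Set.InjOn φ G.verts)
    (hφT : φ '' T = Set.Iio T.ncard) (S : Set ℕ) (hkS : Set.Iio T.ncard ⊆ S)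
    (hSfin : S.Finite) (hcard : S.ncard ≤ G.verts.ncard) :
    ∃ ψ : ℕ → V, Set.InjOn ψ S ∧ ψ '' Set.Iio T.ncard = T ∧ ∀ t ∈ T, ψ (φ t) = t := by
  classical
  haveI : Nonempty V := ⟨hGne.some⟩
  set k := T.ncard with hk
  have hTf : T.Finite := G.finite.subset hT
  have hφTinj : Set.InjOn φ T := hφinj.mono hT
  -- the injection of the non-terminal part
  have hle : (S \ Set.Iio k).encard ≤ (G.verts \ T).encard := by
    have h1 : (S \ Set.Iio k).ncard = S.ncard - k := by
      rw [Set.ncard_diff hkS (Set.finite_Iio k), ncard_Iio]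
    have h2 : (G.verts \ T).ncard = G.verts.ncard - k := by
      rw [Set.ncard_diff hT hTf, hk]
    have h3 : (S \ Set.Iio k).ncard ≤ (G.verts \ T).ncard := by
      rw [h1, h2]; omega
    rwa [(hSfin.diff (t := Set.Iio k)).encard_eq_coe_toFinset_card,
      (G.finite.diff (t := T)).encard_eq_coe_toFinset_card,
      ← Set.ncard_eq_toFinset_card _ (hSfin.diff (t := Set.Iio k)),
      ← Set.ncard_eq_toFinset_card _ (G.finite.diff (t := T)), Nat.cast_le]
  obtain ⟨j, hjsub, hjinj⟩ := Set.Finite.exists_injOn_of_encard_le (hSfin.diff (t := Set.Iio k)) hle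
  refine ⟨fun n => if h : n < k then Function.invFunOn φ T n else j n, ?_, ?_, ?_⟩
  · intro a ha b hb heq
    simp only at heq
    have hmem : ∀ n, n < k → n ∈ φ '' T := fun n hn => by rw [hφT]; exact hn
    have hinvT : ∀ n, n < k → Function.invFunOn φ T n ∈ T := fun n hn =>
      Function.invFunOn_mem (hmem n hn)
    have hinvφ : ∀ n, n < k → φ (Function.invFunOn φ T n) = n := fun n hn =>
      Function.invFunOn_eq (hmem n hn)
    by_cases hak : a < k <;> by_cases hbk : b < k
    · rw [dif_pos hak, dif_pos hbk] at heq
      rw [← hinvφ a hak, ← hinvφ b hbk, heq]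
    · rw [dif_pos hak, dif_neg hbk] at heq
      have h1 : Function.invFunOn φ T a ∈ T := hinvT a hak
      have h2 : j b ∈ G.verts \ T := hjsub ⟨hb, by simpa using hbk⟩
      exact absurd (heq ▸ h1) h2.2
    · rw [dif_neg hak, dif_pos hbk] at heq
      have h1 : Function.invFunOn φ T b ∈ T := hinvT b hbk
      have h2 : j a ∈ G.verts \ T := hjsub ⟨ha, by simpa using hak⟩
      exact absurd (heq ▸ h1) h2.2
    · rw [dif_neg hak, dif_neg hbk] at heq
      exact hjinj ⟨ha, by simpa using hak⟩ ⟨hb, by simpa using hbk⟩ heq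
  · ext t
    simp only [Set.mem_image, Set.mem_Iio]
    constructor
    · rintro ⟨n, hn, rfl⟩
      simp only [dif_pos hn]
      exact Function.invFunOn_mem (show n ∈ φ '' T by rw [hφT]; exact hn)
    · intro ht
      have hφt : φ t < k := by rw [← Set.mem_Iio, ← hφT]; exact ⟨t, ht, rfl⟩
      exact ⟨φ t, hφt, by simp only [dif_pos hφt]; exact hφTinj.leftInvOn_invFunOn ht⟩
  · intro t ht
    have hφt : φ t < k := by rw [← Set.mem_Iio, ← hφT]; exact ⟨t, ht, rfl⟩
    simp only [dif_pos hφt]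
    exact hφTinj.leftInvOn_invFunOn ht

theorem matching_mimicking_network_exists' :
    ∃ f : ℕ → ℕ, ∀ (V : Type) (G : FinGraph V) (T : Set V), T ⊆ G.verts →
      ∃ G' : FinGraph V, T ⊆ G'.verts ∧
        G'.matchingPattern T = G.matchingPattern T ∧
        G'.verts.ncard ≤ f T.ncard := by
  refine ⟨mmBound, fun V G T hT => ?_⟩
  rcases G.verts.eq_empty_or_nonempty with hemp | hGne
  · exact ⟨G, hT, rfl, by rw [hemp]; simp⟩
  obtain ⟨φ, hφinj, hφT⟩ := exists_phi G T hT
  set k := T.ncard with hk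
  set P := (Set.image φ) '' G.matchingPattern T with hP
  have hreal : Realizes k P (G.map φ) := by
    constructor
    · rw [← hφT]
      exact Set.image_mono (f := φ) hT
    · rw [← hφT]
      exact pattern_map G T hT hφinj
  obtain ⟨H, ⟨hHsub, hHpat⟩, -, hle1, hle2⟩ := exists_minimal_realization hreal
  have hmapcard : (G.map φ).verts.ncard = G.verts.ncard := Set.ncard_image_of_injOn hφinj
  obtain ⟨ψ, hψinj, hψT, hψφ⟩ := exists_psi G T hT hGne φ hφinj hφT H.verts hHsub
    H.finite (by rw [← hmapcard]; exact hle1)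
  refine ⟨H.map ψ, ?_, ?_, ?_⟩
  · rw [← hψT]
    exact Set.image_mono (f := ψ) (hHsub.trans le_rfl) |>.trans (Set.image_mono (f := ψ) le_rfl)
  · have h1 := pattern_map H (Set.Iio k) hHsub hψinj
    rw [hψT, hHpat, hP] at h1
    rw [h1, ← Set.image_comp]
    have h2 : ∀ X ∈ G.matchingPattern T, (Set.image ψ ∘ Set.image φ) X = X := by
      intro X hX
      simp only [Function.comp_apply, Set.image_image]
      rw [Set.image_congr (fun x hx => hψφ x (hX.1 hx))]; exact Set.image_id X
    rw [Set.image_congr h2]; exact Set.image_id _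
  · show (ψ '' H.verts).ncard ≤ mmBound k
    rw [Set.ncard_image_of_injOn hψinj]
    exact hle2

/-- There is a function `f : ℕ → ℕ` such that every finite simple graph `G` with a set `T`
of terminal vertices has a matching-mimicking network (a graph containing `T` with the same
matching pattern on `T`) with at most `f (|T|)` vertices. -/
theorem matching_mimicking_network_exists :
    ∃ f : ℕ → ℕ, ∀ (V : Type) (G : FinGraph V) (T : Set V), T ⊆ G.verts →
      ∃ G' : FinGraph V, T ⊆ G'.verts ∧
        G'.matchingPattern T = G.matchingPattern T ∧
        G'.verts.ncard ≤ f T.ncard := by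
  exact matching_mimicking_network_exists'
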